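/- Assume 𝒴 is finite. Let H be an information state and M = μ(H,ζ) with ζ independent of Y conditionally on H, and suppose the expected log scores E[s_log(π_H,Y)] and E[s_log(π_M,Y)] are finite. Then the log-loss communication gap equals an expected Kullback–Leibler divergence: V(M; s_log) − V(H; s_log) = E[KL(π_H ‖ π_M)]. -/

import Mathlib

open MeasureTheory ProbabilityTheory ENNReal

/-- The universal completion of a measurable space `m` on `α`: a set is measurable iff it is
null-measurable with respect to every finite measure on `(α, m)`. -/
def MeasurableSpace.univCompletion {α : Type*} (m : MeasurableSpace α) :
    MeasurableSpace α where
  MeasurableSet' s :=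
    ∀ (μ : @MeasureTheory.Measure α m), MeasureTheory.IsFiniteMeasure μ →
      @MeasureTheory.NullMeasurableSet α m s μ
  measurableSet_empty := fun μ _ => (@MeasurableSet.empty α m).nullMeasurableSet
  measurableSet_compl := fun _ hs μ hμ => (hs μ hμ).compl
  measurableSet_iUnion := fun _ hf μ hμ =>
    MeasureTheory.NullMeasurableSet.iUnion fun i => hf i μ hμ

/-- The posterior of `Y` given the information state `H`, as a (version of the) vector of
conditional probabilities `π_H(y) = P(Y = y | H)`. -/
noncomputable def posterior {Ω ℋ 𝒴 : Type*} [MeasurableSpace Ω]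
    (mℋ : MeasurableSpace ℋ) (P : Measure Ω) (H : Ω → ℋ) (Y : Ω → 𝒴) : Ω → 𝒴 → ℝ :=
  fun ω y => (P[(Y ⁻¹' {y}).indicator (fun _ => (1 : ℝ)) | MeasurableSpace.comap H mℋ]) ω

/-- Bayes risk of the reporting problem with scoring rule `s` (action space: the probability
simplex `Δ(𝒴)`, represented as `stdSimplex ℝ 𝒴`): the infimum of the expected score over all
simplex-valued reports that are measurable with respect to the universal completion of the
σ-algebra on the value space of `H`. -/
noncomputable def ReportRisk {Ω ℋ 𝒴 : Type*} [Fintype 𝒴] [MeasurableSpace Ω]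
    (mℋ : MeasurableSpace ℋ) (P : Measure Ω) (H : Ω → ℋ) (Y : Ω → 𝒴)
    (s : (𝒴 → ℝ) → 𝒴 → ℝ≥0∞) : ℝ≥0∞ :=
  ⨅ q : {q : ℋ → 𝒴 → ℝ //
      Measurable[mℋ.univCompletion] q ∧ ∀ h, q h ∈ stdSimplex ℝ 𝒴},
    ∫⁻ ω, s (q.1 (H ω)) (Y ω) ∂P

/-- A scoring rule is proper if reporting the true distribution minimizes the expected score. -/
def ProperScore {𝒴 : Type*} [Fintype 𝒴] (s : (𝒴 → ℝ) → 𝒴 → ℝ≥0∞) : Prop :=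
  ∀ p ∈ stdSimplex ℝ 𝒴, ∀ q ∈ stdSimplex ℝ 𝒴,
    ∑ y, ENNReal.ofReal (p y) * s p y ≤ ∑ y, ENNReal.ofReal (p y) * s q y

/-- A scoring rule is strictly proper if it is proper and the expected score is minimized
only by the true distribution. -/
def StrictlyProperScore {𝒴 : Type*} [Fintype 𝒴] (s : (𝒴 → ℝ) → 𝒴 → ℝ≥0∞) : Prop :=
  ProperScore s ∧ ∀ p ∈ stdSimplex ℝ 𝒴, ∀ q ∈ stdSimplex ℝ 𝒴,
    (∑ y, ENNReal.ofReal (p y) * s p y = ∑ y, ENNReal.ofReal (p y) * s q y) → p = q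

/-- The pointwise divergence `D_s(p, q) = Σ_y p(y) (s(q, y) − s(p, y))` of a scoring rule,
as a (truncated) difference of the two expected scores. -/
noncomputable def scoreDiv {𝒴 : Type*} [Fintype 𝒴] (s : (𝒴 → ℝ) → 𝒴 → ℝ≥0∞)
    (p q : 𝒴 → ℝ) : ℝ≥0∞ :=
  (∑ y, ENNReal.ofReal (p y) * s q y) - (∑ y, ENNReal.ofReal (p y) * s p y)

open Classical in
/-- The logarithmic scoring rule `s_log(q, y) = −log q(y)`, interpreted as `+∞` when
`q(y) = 0`. -/
noncomputable def slog {𝒴 : Type*} : (𝒴 → ℝ) → 𝒴 → ℝ≥0∞ :=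
  fun q y => if q y = 0 then ⊤ else ENNReal.ofReal (-Real.log (q y))

open Classical in
/-- The Kullback–Leibler divergence `KL(p ‖ q) = Σ_y p(y) log (p(y) / q(y))` on a finite set,
interpreted as `+∞` when `p(y) > 0 = q(y)` for some `y`. -/
noncomputable def KLdiv {𝒴 : Type*} [Fintype 𝒴] (p q : 𝒴 → ℝ) : ℝ≥0∞ :=
  if ∃ y, p y ≠ 0 ∧ q y = 0 then ⊤
  else ENNReal.ofReal (∑ y, p y * Real.log (p y / q y))

/-! ### Auxiliary lemmas -/

set_option linter.unusedSectionVars false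

open Filter

section GibbsAux
variable {𝒴 : Type*} [Fintype 𝒴] {p q : 𝒴 → ℝ}

lemma mem_simplex_le_one (hq : q ∈ stdSimplex ℝ 𝒴) (y : 𝒴) : q y ≤ 1 := by
  rcases hq with ⟨h0, h1⟩
  calc q y ≤ ∑ z, q z := Finset.single_le_sum (fun z _ => h0 z) (Finset.mem_univ y)
  _ = 1 := h1

lemma gibbs_nonneg (hp : p ∈ stdSimplex ℝ 𝒴) (hq : q ∈ stdSimplex ℝ 𝒴)
    (h : ∀ y, p y ≠ 0 → q y ≠ 0) : 0 ≤ ∑ y, p y * Real.log (p y / q y) := by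
  have key : ∀ y : 𝒴, p y - q y ≤ p y * Real.log (p y / q y) := by
    intro y
    by_cases hpy : p y = 0
    · simp [hpy, hq.1 y]
    · have hp0 : 0 < p y := lt_of_le_of_ne (hp.1 y) (Ne.symm hpy)
      have hq0 : 0 < q y := lt_of_le_of_ne (hq.1 y) (Ne.symm (h y hpy))
      have hlog : Real.log (q y / p y) ≤ q y / p y - 1 :=
        Real.log_le_sub_one_of_pos (div_pos hq0 hp0)
      have hd : Real.log (q y / p y) = - Real.log (p y / q y) := by
        rw [Real.log_div (ne_of_gt hq0) (ne_of_gt hp0),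
          Real.log_div (ne_of_gt hp0) (ne_of_gt hq0)]; ring
      rw [hd] at hlog
      have := mul_le_mul_of_nonneg_left hlog (le_of_lt hp0)
      rw [mul_sub, mul_div_cancel₀ _ (ne_of_gt hp0)] at this
      nlinarith
  calc (0:ℝ) = ∑ y, (p y - q y) := by rw [Finset.sum_sub_distrib, hp.2, hq.2]; ring
  _ ≤ _ := Finset.sum_le_sum fun y _ => key y

lemma sum_ofReal_mul_slog (hp : p ∈ stdSimplex ℝ 𝒴) (hq : q ∈ stdSimplex ℝ 𝒴)
    (h : ∀ y, p y ≠ 0 → q y ≠ 0) :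
    ∑ y, ENNReal.ofReal (p y) * slog q y = ENNReal.ofReal (∑ y, p y * (-Real.log (q y))) := by
  have hnn : ∀ y ∈ Finset.univ, 0 ≤ p y * (-Real.log (q y)) := by
    intro y _
    by_cases hpy : p y = 0
    · simp [hpy]
    · have hq0 : 0 < q y := lt_of_le_of_ne (hq.1 y) (Ne.symm (h y hpy))
      have : Real.log (q y) ≤ 0 := Real.log_nonpos (le_of_lt hq0) (mem_simplex_le_one hq y)
      exact mul_nonneg (hp.1 y) (by linarith)
  rw [ENNReal.ofReal_sum_of_nonneg hnn]
  refine Finset.sum_congr rfl fun y _ => ?_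
  by_cases hpy : p y = 0
  · simp [hpy]
  · rw [slog, if_neg (h y hpy), ← ENNReal.ofReal_mul (hp.1 y)]

lemma sum_slog_self_ne_top (hp : p ∈ stdSimplex ℝ 𝒴) :
    ∑ y, ENNReal.ofReal (p y) * slog p y ≠ ⊤ := by
  rw [sum_ofReal_mul_slog hp hp (fun y h => h)]
  exact ENNReal.ofReal_ne_top

/-- The Gibbs identity: expected log score of a report `q` under `p` decomposes as
`KL(p‖q)` plus the entropy term. -/
lemma gibbs_identity (hp : p ∈ stdSimplex ℝ 𝒴) (hq : q ∈ stdSimplex ℝ 𝒴) :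
    ∑ y, ENNReal.ofReal (p y) * slog q y
      = KLdiv p q + ∑ y, ENNReal.ofReal (p y) * slog p y := by
  by_cases h : ∃ y, p y ≠ 0 ∧ q y = 0
  · rw [KLdiv, if_pos h, top_add, ENNReal.sum_eq_top]
    obtain ⟨y, hpy, hqy⟩ := h
    refine ⟨y, Finset.mem_univ y, ?_⟩
    rw [slog, if_pos hqy, ENNReal.mul_top]
    simpa [ENNReal.ofReal_eq_zero, not_le] using lt_of_le_of_ne (hp.1 y) (Ne.symm hpy)
  · push_neg at h
    rw [KLdiv, if_neg (by push_neg; exact h), sum_ofReal_mul_slog hp hq h,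
      sum_ofReal_mul_slog hp hp (fun y hy => hy),
      ← ENNReal.ofReal_add (gibbs_nonneg hp hq h)]
    · congr 1
      rw [← Finset.sum_add_distrib]
      refine Finset.sum_congr rfl fun y _ => ?_
      by_cases hpy : p y = 0
      · simp [hpy]
      · have hq0 : q y ≠ 0 := h y hpy
        rw [Real.log_div hpy hq0]; ring
    · refine Finset.sum_nonneg fun y _ => ?_
      by_cases hpy : p y = 0
      · simp [hpy]
      · have hp0 : 0 < p y := lt_of_le_of_ne (hp.1 y) (Ne.symm hpy)
        have : Real.log (p y) ≤ 0 := Real.log_nonpos (hp.1 y) (mem_simplex_le_one hp y)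
        exact mul_nonneg (le_of_lt hp0) (by linarith)
end GibbsAux

lemma le_univCompletion {α : Type*} (m : MeasurableSpace α) : m ≤ m.univCompletion :=
  fun _s hs _μ _ => MeasurableSet.nullMeasurableSet hs

section MeasAux
variable {Ω 𝒴 : Type*} [Fintype 𝒴]

lemma measurable_slog_comp {m : MeasurableSpace Ω} {f : Ω → 𝒴 → ℝ}
    (hf : Measurable[m] f) (y : 𝒴) : Measurable[m] fun ω => slog (f ω) y := by
  have hfy : Measurable[m] fun ω => f ω y := (measurable_pi_apply y).comp hf
  have hset : MeasurableSet[m] {ω | f ω y = 0} := hfy (measurableSet_singleton 0)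
  have : Measurable[m] fun ω =>
      if f ω y = 0 then (⊤ : ℝ≥0∞) else ENNReal.ofReal (-Real.log (f ω y)) :=
    Measurable.ite hset measurable_const
      ((Real.measurable_log.comp hfy).neg.ennreal_ofReal)
  simpa [slog] using this

lemma measurable_KL_comp {m : MeasurableSpace Ω} {f g : Ω → 𝒴 → ℝ}
    (hf : Measurable[m] f) (hg : Measurable[m] g) :
    Measurable[m] fun ω => KLdiv (f ω) (g ω) := by
  classical
  have hfy : ∀ y, Measurable[m] fun ω => f ω y := fun y => (measurable_pi_apply y).comp hf
  have hgy : ∀ y, Measurable[m] fun ω => g ω y := fun y => (measurable_pi_apply y).comp hg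
  have hset : MeasurableSet[m] {ω | ∃ y, f ω y ≠ 0 ∧ g ω y = 0} := by
    have : {ω | ∃ y, f ω y ≠ 0 ∧ g ω y = 0}
        = ⋃ y, ({ω | f ω y ≠ 0} ∩ {ω | g ω y = 0}) := by
      ext ω; simp [Set.mem_iUnion, Set.mem_inter_iff]
    rw [this]
    exact MeasurableSet.iUnion fun y =>
      (((hfy y) (measurableSet_singleton 0)).compl).inter ((hgy y) (measurableSet_singleton 0))
  have hsum : Measurable[m] fun ω => ENNReal.ofReal (∑ y, f ω y * Real.log (f ω y / g ω y)) := by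
    refine Measurable.ennreal_ofReal ?_
    refine Finset.measurable_sum _ fun y _ => ?_
    exact (hfy y).mul (Real.measurable_log.comp ((hfy y).div (hgy y)))
  have : Measurable[m] fun ω =>
      if ∃ y, f ω y ≠ 0 ∧ g ω y = 0 then (⊤ : ℝ≥0∞)
      else ENNReal.ofReal (∑ y, f ω y * Real.log (f ω y / g ω y)) :=
    Measurable.ite hset measurable_const hsum
  simpa [KLdiv] using this
end MeasAux

section Post
variable {Ω ℋ 𝒴 : Type*} [mΩ : MeasurableSpace Ω] [Fintype 𝒴] [MeasurableSpace 𝒴]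
  [DiscreteMeasurableSpace 𝒴]
  {mℋ : MeasurableSpace ℋ}
  (P : Measure Ω) [IsProbabilityMeasure P] {Y : Ω → 𝒴} {H : Ω → ℋ}

lemma posterior_coord_mble (y : 𝒴) :
    Measurable[mℋ.comap H] (fun ω => posterior mℋ P H Y ω y) :=
  (stronglyMeasurable_condExp (m := mℋ.comap H)).measurable

lemma posterior_mble : Measurable[mℋ.comap H] (posterior mℋ P H Y) :=
  @measurable_pi_lambda Ω 𝒴 (fun _ => ℝ) (mℋ.comap H) _ (posterior mℋ P H Y)
    (fun y => posterior_coord_mble P y)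

lemma posterior_integrable (y : 𝒴) :
    Integrable (fun ω => posterior mℋ P H Y ω y) P := integrable_condExp

lemma posterior_nonneg (y : 𝒴) :
    0 ≤ᵐ[P] fun ω => posterior mℋ P H Y ω y :=
  condExp_nonneg (Eventually.of_forall fun ω => Set.indicator_nonneg (fun _ _ => zero_le_one) ω)

lemma posterior_mem_simplex (hY : Measurable Y) (hH : Measurable H) :
    ∀ᵐ ω ∂P, posterior mℋ P H Y ω ∈ stdSimplex ℝ 𝒴 := by
  have hnn : ∀ᵐ ω ∂P, ∀ y, 0 ≤ posterior mℋ P H Y ω y :=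
    (ae_all_iff).2 fun y => posterior_nonneg P y
  classical
  have hsum : ∀ᵐ ω ∂P, ∑ y, posterior mℋ P H Y ω y = 1 := by
    have h1 : ∑ y, (fun ω => posterior mℋ P H Y ω y)
        =ᵐ[P] P[(∑ y : 𝒴, (Y ⁻¹' {y}).indicator (fun _ => (1 : ℝ))) | mℋ.comap H] := by
      exact (condExp_finsetSum (fun y _ =>
        (integrable_const (1:ℝ)).indicator (hY (MeasurableSet.singleton y))) (mℋ.comap H)).symm
    have h2 : (∑ y : 𝒴, (Y ⁻¹' {y}).indicator (fun _ => (1 : ℝ))) = fun _ => (1:ℝ) := by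
      funext ω
      rw [Finset.sum_apply]
      have : ∀ y : 𝒴, (Y ⁻¹' {y}).indicator (fun _ => (1 : ℝ)) ω
          = if Y ω = y then 1 else 0 := by
        intro y; simp [Set.indicator_apply]
      simp only [this]
      rw [Finset.sum_ite_eq Finset.univ (Y ω) (fun _ => (1:ℝ))]
      simp
    rw [h2] at h1
    have h3 := condExp_const (μ := P) (hm := hH.comap_le) (1:ℝ)
    filter_upwards [h1] with ω hω
    have := Finset.sum_apply ω Finset.univ (fun y ω => posterior mℋ P H Y ω y)
    rw [← this, hω, h3]
  filter_upwards [hnn, hsum] with ω h1 h2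
  exact ⟨h1, h2⟩

/-- σ(H)-agreement: `P (s ∩ {Y = y})` has density `π_H(y)` on `σ(H)`. -/
lemma posterior_agree (hY : Measurable Y) (hH : Measurable H) (y : 𝒴)
    {s : Set Ω} (hs : MeasurableSet[mℋ.comap H] s) :
    P (s ∩ Y ⁻¹' {y}) = ∫⁻ ω in s, ENNReal.ofReal (posterior mℋ P H Y ω y) ∂P := by
  have hs' : MeasurableSet s := hH.comap_le s hs
  have hint : Integrable ((Y ⁻¹' {y}).indicator (fun _ => (1 : ℝ))) P :=
    (integrable_const (1:ℝ)).indicator (hY (MeasurableSet.singleton y))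
  have h1 : ∫ ω in s, posterior mℋ P H Y ω y ∂P
      = ∫ ω in s, (Y ⁻¹' {y}).indicator (fun _ => (1 : ℝ)) ω ∂P :=
    setIntegral_condExp hH.comap_le hint hs
  have h2 : ∫ ω in s, (Y ⁻¹' {y}).indicator (fun _ => (1 : ℝ)) ω ∂P
      = (P (s ∩ Y ⁻¹' {y})).toReal := by
    rw [integral_indicator_const _ (hY (MeasurableSet.singleton y))]
    rw [measureReal_restrict_apply (hY (MeasurableSet.singleton y))]
    simp [Set.inter_comm, measureReal_def]
  rw [← ofReal_integral_eq_lintegral_ofReal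
    ((posterior_integrable P y).integrableOn)
    (ae_restrict_of_ae (posterior_nonneg P y)),
    h1, h2, ENNReal.ofReal_toReal (measure_ne_top P _)]

/-- Change-of-conditioning: if on a sub-σ-algebra `m` the conditional law of `Y` has
density vector `ρ`, then integration of an `m`-measurable `𝒴`-indexed integrand evaluated
at `Y` can be computed by averaging against `ρ`. -/
lemma lintegral_eval_eq_sum (hY : Measurable Y) {m : MeasurableSpace Ω}
    (hm : m ≤ mΩ)
    {ρ : Ω → 𝒴 → ℝ} (hρ : ∀ y, Measurable[mΩ] fun ω => ρ ω y)
    (hagree : ∀ (y : 𝒴) {s : Set Ω}, MeasurableSet[m] s →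
      P (s ∩ Y ⁻¹' {y}) = ∫⁻ ω in s, ENNReal.ofReal (ρ ω y) ∂P)
    {F : Ω → 𝒴 → ℝ≥0∞} (hF : ∀ y, Measurable[m] fun ω => F ω y) :
    ∫⁻ ω, F ω (Y ω) ∂P = ∫⁻ ω, ∑ y, ENNReal.ofReal (ρ ω y) * F ω y ∂P := by
  classical
  have hstep : ∀ ω, F ω (Y ω)
      = ∑ y, (Y ⁻¹' {y}).indicator (fun ω => F ω y) ω := by
    intro ω
    have : ∀ y : 𝒴, (Y ⁻¹' {y}).indicator (fun ω => F ω y) ω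
        = if Y ω = y then F ω y else 0 := by
      intro y; simp [Set.indicator_apply]
    simp only [this]
    rw [Finset.sum_ite_eq Finset.univ (Y ω) (fun y => F ω y)]
    simp
  calc ∫⁻ ω, F ω (Y ω) ∂P
      = ∫⁻ ω, ∑ y, (Y ⁻¹' {y}).indicator (fun ω => F ω y) ω ∂P := by
        exact lintegral_congr hstep
    _ = ∑ y, ∫⁻ ω, (Y ⁻¹' {y}).indicator (fun ω => F ω y) ω ∂P := by
        refine lintegral_finset_sum _ fun y _ => ?_
        exact ((hF y).mono hm le_rfl).indicator (hY (MeasurableSet.singleton y))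
    _ = ∑ y, ∫⁻ ω, ENNReal.ofReal (ρ ω y) * F ω y ∂P := by
        refine Finset.sum_congr rfl fun y _ => ?_
        rw [lintegral_indicator (hY (MeasurableSet.singleton y)) (fun ω => F ω y)]
        have htrim : (P.restrict (Y ⁻¹' {y})).trim hm
            = (P.withDensity fun ω => ENNReal.ofReal (ρ ω y)).trim hm := by
          refine @Measure.ext Ω m _ _ fun s hs => ?_
          rw [trim_measurableSet_eq hm hs, trim_measurableSet_eq hm hs,
            Measure.restrict_apply (hm s hs), withDensity_apply _ (hm s hs)]
          exact hagree y hs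
        calc ∫⁻ ω in Y ⁻¹' {y}, F ω y ∂P
            = ∫⁻ ω, F ω y ∂((P.restrict (Y ⁻¹' {y})).trim hm) :=
              (lintegral_trim hm (hF y)).symm
          _ = ∫⁻ ω, F ω y ∂((P.withDensity fun ω => ENNReal.ofReal (ρ ω y)).trim hm) := by
              rw [htrim]
          _ = ∫⁻ ω, F ω y ∂(P.withDensity fun ω => ENNReal.ofReal (ρ ω y)) :=
              lintegral_trim hm (hF y)
          _ = ∫⁻ ω, ENNReal.ofReal (ρ ω y) * F ω y ∂P := by
              rw [lintegral_withDensity_eq_lintegral_mul P ((hρ y).ennreal_ofReal)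
                ((hF y).mono hm le_rfl)]
              rfl
    _ = ∫⁻ ω, ∑ y, ENNReal.ofReal (ρ ω y) * F ω y ∂P := by
        refine (lintegral_finset_sum _ fun y _ => ?_).symm
        have hFy : Measurable[mΩ] (fun ω => F ω y) := (hF y).mono hm le_rfl
        exact ((hρ y).ennreal_ofReal).mul hFy
end Post

section PairAgree
variable {Ω ℋ 𝒵 𝒴 : Type*} [mΩ : MeasurableSpace Ω] [StandardBorelSpace Ω] [Nonempty Ω]
  {mℋ : MeasurableSpace ℋ} {m𝒵 : MeasurableSpace 𝒵}
  [Fintype 𝒴] [MeasurableSpace 𝒴] [DiscreteMeasurableSpace 𝒴]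
  (P : Measure Ω) [IsProbabilityMeasure P] {Y : Ω → 𝒴} {H : Ω → ℋ} {ζ : Ω → 𝒵}

/-- σ(H,ζ)-agreement, via conditional independence of `ζ` and `Y` given `H`. -/
lemma posterior_agree_pair (hY : Measurable Y) (hH : Measurable H) (hζ : Measurable ζ)
    (hindep : CondIndepFun (mℋ.comap H) hH.comap_le ζ Y P) (y : 𝒴)
    {s : Set Ω}
    (hs : MeasurableSet[(mℋ.prod m𝒵).comap (fun ω => (H ω, ζ ω))] s) :
    P (s ∩ Y ⁻¹' {y}) = ∫⁻ ω in s, ENNReal.ofReal (posterior mℋ P H Y ω y) ∂P := by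
  classical
  have hm : (mℋ.prod m𝒵).comap (fun ω => (H ω, ζ ω)) ≤ mΩ := (hH.prodMk hζ).comap_le
  set π : Ω → ℝ := fun ω => posterior mℋ P H Y ω y with hπ_def
  set μ' : Measure Ω := P.withDensity fun ω => ENNReal.ofReal (π ω) with hμ'_def
  set ν : Measure Ω := P.restrict (Y ⁻¹' {y}) with hν_def
  have hμ'univ : μ' Set.univ = P (Y ⁻¹' {y}) := by
    rw [hμ'_def, withDensity_apply _ MeasurableSet.univ, Measure.restrict_univ]
    rw [show P (Y ⁻¹' {y}) = P (Set.univ ∩ Y ⁻¹' {y}) by rw [Set.univ_inter],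
      posterior_agree P hY hH y MeasurableSet.univ, Measure.restrict_univ]
  haveI : IsFiniteMeasure μ' := by
    constructor; rw [hμ'univ]; exact measure_lt_top P _
  set C : Set (Set Ω) :=
    {t | ∃ A B, MeasurableSet[mℋ] A ∧ MeasurableSet[m𝒵] B ∧ t = H ⁻¹' A ∩ ζ ⁻¹' B} with hC_def
  have hgen : (mℋ.prod m𝒵).comap (fun ω => (H ω, ζ ω))
      = MeasurableSpace.generateFrom C := by
    rw [show mℋ.prod m𝒵 = @Prod.instMeasurableSpace ℋ 𝒵 mℋ m𝒵 from rfl,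
      ← @generateFrom_prod ℋ 𝒵 mℋ m𝒵, MeasurableSpace.comap_generateFrom]
    congr 1
    ext t
    constructor
    · rintro ⟨u, hu, rfl⟩
      obtain ⟨A, hA, B, hB, rfl⟩ := hu
      exact ⟨A, B, hA, hB, (Set.mk_preimage_prod _ _).symm⟩
    · rintro ⟨A, B, hA, hB, rfl⟩
      exact ⟨A ×ˢ B, Set.mem_image2_of_mem hA hB, Set.mk_preimage_prod _ _⟩
  have hpi : IsPiSystem C := by
    rintro t1 ⟨A1, B1, hA1, hB1, rfl⟩ t2 ⟨A2, B2, hA2, hB2, rfl⟩ -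
    refine ⟨A1 ∩ A2, B1 ∩ B2, hA1.inter hA2, hB1.inter hB2, ?_⟩
    ext ω; simp only [Set.mem_inter_iff, Set.mem_preimage]; tauto
  have hagreeC : ∀ t ∈ C, ν t = μ' t := by
    rintro t ⟨A, B, hA, hB, rfl⟩
    have htm : MeasurableSet (H ⁻¹' A ∩ ζ ⁻¹' B) := (hH hA).inter (hζ hB)
    have hHA : MeasurableSet[mℋ.comap H] (H ⁻¹' A) := ⟨A, hA, rfl⟩
    have hHA' : MeasurableSet (H ⁻¹' A) := hH hA
    have hζB : MeasurableSet (ζ ⁻¹' B) := hζ hB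
    have hYy : MeasurableSet (Y ⁻¹' {y}) := hY (MeasurableSet.singleton y)
    rw [hν_def, hμ'_def, Measure.restrict_apply htm, withDensity_apply _ htm]
    have hπ_sm : StronglyMeasurable[mℋ.comap H] π := stronglyMeasurable_condExp
    have hg_int : Integrable ((ζ ⁻¹' B).indicator (fun _ => (1:ℝ))) P :=
      (integrable_const (1:ℝ)).indicator hζB
    have hπg : (fun ω => π ω * (ζ ⁻¹' B).indicator (fun _ => (1:ℝ)) ω)
        = (ζ ⁻¹' B).indicator π := by
      funext ω; by_cases hω : ω ∈ ζ ⁻¹' B <;>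
        simp [Set.indicator_of_mem, Set.indicator_of_notMem, hω]
    have hπg_int : Integrable (π * (ζ ⁻¹' B).indicator (fun _ => (1:ℝ))) P := by
      have : (π * (ζ ⁻¹' B).indicator (fun _ => (1:ℝ))) = (ζ ⁻¹' B).indicator π := by
        funext ω; exact congrFun hπg ω
      rw [this]
      exact (posterior_integrable P y).indicator hζB
    have hci := (condIndepFun_iff_condExp_inter_preimage_eq_mul hζ hY).mp hindep
      B {y} hB (MeasurableSet.singleton y)
    have hpull := condExp_mul_of_stronglyMeasurable_left (m := mℋ.comap H) (μ := P) hπ_sm hπg_int hg_int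
    have hLHS : (P ((H ⁻¹' A ∩ ζ ⁻¹' B) ∩ Y ⁻¹' {y})).toReal
        = ∫ ω in H ⁻¹' A, ((ζ ⁻¹' B ∩ Y ⁻¹' {y}).indicator (fun _ => (1:ℝ))) ω ∂P := by
      rw [integral_indicator_const (1:ℝ) (hζB.inter hYy),
        measureReal_restrict_apply (hζB.inter hYy)]
      rw [smul_eq_mul, mul_one, measureReal_def]
      congr 2
      ext ω; simp only [Set.mem_inter_iff, Set.mem_preimage]; tauto
    have hint_ind : Integrable ((ζ ⁻¹' B ∩ Y ⁻¹' {y}).indicator (fun _ => (1:ℝ))) P :=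
      (integrable_const (1:ℝ)).indicator (hζB.inter hYy)
    have hLHS2 : ∫ ω in H ⁻¹' A, ((ζ ⁻¹' B ∩ Y ⁻¹' {y}).indicator (fun _ => (1:ℝ))) ω ∂P
        = ∫ ω in H ⁻¹' A, (P⟦ζ ⁻¹' B ∩ Y ⁻¹' {y} | mℋ.comap H⟧) ω ∂P :=
      (setIntegral_condExp hH.comap_le hint_ind hHA).symm
    have hRHS : ∫ ω in H ⁻¹' A ∩ ζ ⁻¹' B, π ω ∂P
        = ∫ ω in H ⁻¹' A, ((ζ ⁻¹' B).indicator π) ω ∂P := by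
      rw [setIntegral_indicator hζB]
    have hRHS2 : ∫ ω in H ⁻¹' A, ((ζ ⁻¹' B).indicator π) ω ∂P
        = ∫ ω in H ⁻¹' A, (P[π * (ζ ⁻¹' B).indicator (fun _ => (1:ℝ)) | mℋ.comap H]) ω ∂P := by
      rw [setIntegral_condExp hH.comap_le hπg_int hHA]
      refine setIntegral_congr_ae hHA' ?_
      exact Eventually.of_forall fun ω _ => (congrFun hπg ω).symm
    have hmid : ∫ ω in H ⁻¹' A, (P⟦ζ ⁻¹' B ∩ Y ⁻¹' {y} | mℋ.comap H⟧) ω ∂P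
        = ∫ ω in H ⁻¹' A, (P[π * (ζ ⁻¹' B).indicator (fun _ => (1:ℝ)) | mℋ.comap H]) ω ∂P := by
      refine setIntegral_congr_ae hHA' ?_
      filter_upwards [hci, hpull] with ω h1 h2 _
      rw [h1, h2]
      simp only [Pi.mul_apply]
      rw [hπ_def]
      ring_nf
      rfl
    rw [← ofReal_integral_eq_lintegral_ofReal ((posterior_integrable P y).integrableOn)
      (ae_restrict_of_ae (posterior_nonneg P y)),
      ← ENNReal.ofReal_toReal (measure_ne_top P ((H ⁻¹' A ∩ ζ ⁻¹' B) ∩ Y ⁻¹' {y}))]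
    congr 1
    rw [hLHS, hLHS2, hmid, ← hRHS2, ← hRHS]
  have htrim : ν.trim hm = μ'.trim hm := by
    refine ext_of_generate_finite (m0 := (mℋ.prod m𝒵).comap (fun ω => (H ω, ζ ω)))
      (μ := ν.trim hm) (ν := μ'.trim hm) C hgen hpi ?_ ?_
    · intro t ht
      have htm : MeasurableSet[(mℋ.prod m𝒵).comap (fun ω => (H ω, ζ ω))] t := by
        rw [hgen]; exact MeasurableSpace.measurableSet_generateFrom ht
      rw [trim_measurableSet_eq hm htm, trim_measurableSet_eq hm htm]
      exact hagreeC t ht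
    · rw [trim_measurableSet_eq hm MeasurableSet.univ,
        trim_measurableSet_eq hm MeasurableSet.univ, hμ'univ, hν_def,
        Measure.restrict_apply_univ]
  have hsm : MeasurableSet s := hm s hs
  have h2 : ν.trim hm s = μ'.trim hm s := by rw [htrim]
  rw [trim_measurableSet_eq hm hs, trim_measurableSet_eq hm hs] at h2
  rw [hν_def] at h2
  rw [Measure.restrict_apply hsm] at h2
  rw [h2, hμ'_def, withDensity_apply _ hsm]
end PairAgree

section Risk
variable {Ω 𝒳 𝒴 : Type*} [mΩ : MeasurableSpace Ω]
  [m𝒳 : MeasurableSpace 𝒳] [StandardBorelSpace 𝒳]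
  [Fintype 𝒴] [MeasurableSpace 𝒴] [DiscreteMeasurableSpace 𝒴] [Nonempty 𝒴]
  (P : Measure Ω) [IsProbabilityMeasure P] {Y : Ω → 𝒴} {X : Ω → 𝒳}

/-- There is an everywhere simplex-valued, measurable report which realizes the posterior. -/
lemma exists_report (hY : Measurable Y) (hX : Measurable X) :
    ∃ q : 𝒳 → 𝒴 → ℝ, Measurable[m𝒳] q ∧ (∀ x, q x ∈ stdSimplex ℝ 𝒴) ∧
      ∀ᵐ ω ∂P, q (X ω) = posterior m𝒳 P X Y ω := by
  classical
  haveI : StandardBorelSpace 𝒴 := standardBorelSpace_of_discreteMeasurableSpace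
  refine ⟨fun x y => (condDistrib Y X P x {y}).toReal, ?_, ?_, ?_⟩
  · exact measurable_pi_lambda _ fun y =>
      (Kernel.measurable_coe _ (MeasurableSet.singleton y)).ennreal_toReal
  · intro x
    constructor
    · intro y; exact ENNReal.toReal_nonneg
    · rw [← ENNReal.toReal_sum (fun y _ => measure_ne_top _ _)]
      have huniv : (Set.univ : Set 𝒴) = ⋃ y ∈ Finset.univ, ({y} : Set 𝒴) := by
        simp only [Finset.mem_univ, Set.iUnion_true]
        exact (Set.iUnion_of_singleton 𝒴).symm
      have hdisj : (↑(Finset.univ : Finset 𝒴) : Set 𝒴).PairwiseDisjoint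
          (fun y => ({y} : Set 𝒴)) := by
        intro a _ b _ hab
        simpa [Function.onFun] using Set.disjoint_singleton.2 hab
      rw [show (∑ y : 𝒴, condDistrib Y X P x {y})
          = condDistrib Y X P x Set.univ by
        rw [huniv, measure_biUnion_finset hdisj
          (fun y _ => MeasurableSet.singleton y)]]
      simp
  · have hae : ∀ y : 𝒴, ∀ᵐ ω ∂P,
        (condDistrib Y X P (X ω) {y}).toReal = posterior m𝒳 P X Y ω y := by
      intro y
      exact condDistrib_ae_eq_condExp hX hY (MeasurableSet.singleton y)
    have := (ae_all_iff).2 hae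
    filter_upwards [this] with ω hω
    funext y
    exact hω y

/-- The Bayes risk of the log-loss reporting problem equals the expected log score at the
posterior. -/
lemma reportRisk_eq (hY : Measurable Y) (hX : Measurable X) :
    ReportRisk m𝒳 P X Y slog = ∫⁻ ω, slog (posterior m𝒳 P X Y ω) (Y ω) ∂P := by
  obtain ⟨q0, hq0m, hq0s, hq0ae⟩ := exists_report P hY hX
  apply le_antisymm
  · have hle : ReportRisk m𝒳 P X Y slog ≤ ∫⁻ ω, slog (q0 (X ω)) (Y ω) ∂P :=
      iInf_le _ (⟨q0, hq0m.mono (le_univCompletion m𝒳) le_rfl, hq0s⟩ :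
        {q : 𝒳 → 𝒴 → ℝ // Measurable[m𝒳.univCompletion] q ∧ ∀ x, q x ∈ stdSimplex ℝ 𝒴})
    refine hle.trans_eq ?_
    refine lintegral_congr_ae ?_
    filter_upwards [hq0ae] with ω hω
    rw [hω]
  · refine le_iInf ?_
    rintro ⟨q, hqm, hqs⟩
    simp only
    haveI : IsProbabilityMeasure (P.map X) := Measure.isProbabilityMeasure_map hX.aemeasurable
    have hnull : NullMeasurable q (P.map X) := fun s hs => hqm hs (P.map X) inferInstance
    have haem : AEMeasurable q (P.map X) := hnull.aemeasurable
    have hq'm : Measurable (haem.mk q) := haem.measurable_mk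
    have hae : ∀ᵐ ω ∂P, q (X ω) = haem.mk q (X ω) :=
      ae_of_ae_map hX.aemeasurable haem.ae_eq_mk
    have hsimp' : ∀ᵐ ω ∂P, haem.mk q (X ω) ∈ stdSimplex ℝ 𝒴 := by
      filter_upwards [hae] with ω h
      rw [← h]; exact hqs (X ω)
    have hFq : ∀ y, Measurable[m𝒳.comap X] fun ω => slog (haem.mk q (X ω)) y :=
      fun y => measurable_slog_comp (hq'm.comp (comap_measurable X)) y
    have hFp : ∀ y, Measurable[m𝒳.comap X] fun ω => slog (posterior m𝒳 P X Y ω) y :=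
      fun y => measurable_slog_comp (posterior_mble P) y
    have hρ : ∀ y, Measurable[mΩ] fun ω => posterior m𝒳 P X Y ω y :=
      fun y => (posterior_coord_mble P y).mono hX.comap_le le_rfl
    have hagree : ∀ (y : 𝒴) {s : Set Ω}, MeasurableSet[m𝒳.comap X] s →
        P (s ∩ Y ⁻¹' {y}) = ∫⁻ ω in s, ENNReal.ofReal (posterior m𝒳 P X Y ω y) ∂P :=
      fun y _s hs => posterior_agree P hY hX y hs
    calc ∫⁻ ω, slog (posterior m𝒳 P X Y ω) (Y ω) ∂P
        = ∫⁻ ω, ∑ y, ENNReal.ofReal (posterior m𝒳 P X Y ω y)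
            * slog (posterior m𝒳 P X Y ω) y ∂P :=
          lintegral_eval_eq_sum P hY hX.comap_le hρ hagree hFp
      _ ≤ ∫⁻ ω, ∑ y, ENNReal.ofReal (posterior m𝒳 P X Y ω y)
            * slog (haem.mk q (X ω)) y ∂P := by
          refine lintegral_mono_ae ?_
          filter_upwards [posterior_mem_simplex P hY hX, hsimp'] with ω h1 h2
          rw [gibbs_identity h1 h2]
          exact le_add_self
      _ = ∫⁻ ω, slog (haem.mk q (X ω)) (Y ω) ∂P :=
          (lintegral_eval_eq_sum P hY hX.comap_le hρ hagree hFq).symm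
      _ = ∫⁻ ω, slog (q (X ω)) (Y ω) ∂P := by
          refine lintegral_congr_ae ?_
          filter_upwards [hae] with ω h
          rw [h]
end Risk

/-- log-loss communication gap as expected KL divergence. -/
theorem log_loss_gap_eq_expected_KL
    {Ω ℋ ℳ 𝒵 𝒴 : Type*}
    [MeasurableSpace Ω] [StandardBorelSpace Ω] [Nonempty Ω]
    [mℋ : MeasurableSpace ℋ] [StandardBorelSpace ℋ]
    [mℳ : MeasurableSpace ℳ] [StandardBorelSpace ℳ]
    [MeasurableSpace 𝒵]
    [Fintype 𝒴] [MeasurableSpace 𝒴] [DiscreteMeasurableSpace 𝒴]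
    (P : Measure Ω) [IsProbabilityMeasure P]
    (Y : Ω → 𝒴) (hY : Measurable Y)
    (H : Ω → ℋ) (hH : Measurable H)
    (ζ : Ω → 𝒵) (hζ : Measurable ζ)
    (g : ℋ × 𝒵 → ℳ) (hg : Measurable g)
    (M : Ω → ℳ) (hM : M = fun ω => g (H ω, ζ ω))
    (hindep : CondIndepFun (MeasurableSpace.comap H mℋ) hH.comap_le ζ Y P)
    (hHfin : ∫⁻ ω, slog (posterior mℋ P H Y ω) (Y ω) ∂P ≠ ⊤)
    (hMfin : ∫⁻ ω, slog (posterior mℳ P M Y ω) (Y ω) ∂P ≠ ⊤) :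
    ReportRisk mℳ P M Y slog - ReportRisk mℋ P H Y slog =
      ∫⁻ ω, KLdiv (posterior mℋ P H Y ω) (posterior mℳ P M Y ω) ∂P := by
  classical
  haveI : Nonempty 𝒴 := Nonempty.map Y inferInstance
  have hMm : Measurable M := by rw [hM]; exact hg.comp (hH.prodMk hζ)
  have hmp : (mℋ.prod ‹MeasurableSpace 𝒵›).comap (fun ω => (H ω, ζ ω))
      ≤ ‹MeasurableSpace Ω› := (hH.prodMk hζ).comap_le
  have hle : mℳ.comap M ≤ (mℋ.prod ‹MeasurableSpace 𝒵›).comap (fun ω => (H ω, ζ ω)) := by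
    rw [hM, show (fun ω => g (H ω, ζ ω)) = g ∘ (fun ω => (H ω, ζ ω)) from rfl,
      ← MeasurableSpace.comap_comp]
    exact MeasurableSpace.comap_mono hg.comap_le
  have hρ : ∀ y, Measurable fun ω => posterior mℋ P H Y ω y :=
    fun y => (posterior_coord_mble P y).mono hH.comap_le le_rfl
  have hagreeH : ∀ (y : 𝒴) {s : Set Ω}, MeasurableSet[mℋ.comap H] s →
      P (s ∩ Y ⁻¹' {y}) = ∫⁻ ω in s, ENNReal.ofReal (posterior mℋ P H Y ω y) ∂P :=
    fun y _s hs => posterior_agree P hY hH y hs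
  have hagreeP : ∀ (y : 𝒴) {s : Set Ω},
      MeasurableSet[(mℋ.prod ‹MeasurableSpace 𝒵›).comap (fun ω => (H ω, ζ ω))] s →
      P (s ∩ Y ⁻¹' {y}) = ∫⁻ ω in s, ENNReal.ofReal (posterior mℋ P H Y ω y) ∂P :=
    fun y _s hs => posterior_agree_pair P hY hH hζ hindep y hs
  have hFM : ∀ y, Measurable[(mℋ.prod ‹MeasurableSpace 𝒵›).comap (fun ω => (H ω, ζ ω))]
      fun ω => slog (posterior mℳ P M Y ω) y :=
    fun y => measurable_slog_comp ((posterior_mble P).mono hle le_rfl) y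
  have hFH : ∀ y, Measurable[mℋ.comap H] fun ω => slog (posterior mℋ P H Y ω) y :=
    fun y => measurable_slog_comp (posterior_mble P) y
  have h1 : ∫⁻ ω, slog (posterior mℳ P M Y ω) (Y ω) ∂P
      = ∫⁻ ω, ∑ y, ENNReal.ofReal (posterior mℋ P H Y ω y)
          * slog (posterior mℳ P M Y ω) y ∂P :=
    lintegral_eval_eq_sum P hY hmp hρ hagreeP hFM
  have h2 : ∫⁻ ω, slog (posterior mℋ P H Y ω) (Y ω) ∂P
      = ∫⁻ ω, ∑ y, ENNReal.ofReal (posterior mℋ P H Y ω y)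
          * slog (posterior mℋ P H Y ω) y ∂P :=
    lintegral_eval_eq_sum P hY hH.comap_le hρ hagreeH hFH
  have h3 : ∫⁻ ω, ∑ y, ENNReal.ofReal (posterior mℋ P H Y ω y)
        * slog (posterior mℳ P M Y ω) y ∂P
      = ∫⁻ ω, (KLdiv (posterior mℋ P H Y ω) (posterior mℳ P M Y ω)
          + ∑ y, ENNReal.ofReal (posterior mℋ P H Y ω y)
            * slog (posterior mℋ P H Y ω) y) ∂P := by
    refine lintegral_congr_ae ?_
    filter_upwards [posterior_mem_simplex P hY hH, posterior_mem_simplex P hY hMm]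
      with ω hH1 hM1
    exact gibbs_identity hH1 hM1
  have hKLm : Measurable fun ω =>
      KLdiv (posterior mℋ P H Y ω) (posterior mℳ P M Y ω) :=
    measurable_KL_comp ((posterior_mble P).mono hH.comap_le le_rfl)
      ((posterior_mble P).mono hMm.comap_le le_rfl)
  have h4 : ∫⁻ ω, (KLdiv (posterior mℋ P H Y ω) (posterior mℳ P M Y ω)
        + ∑ y, ENNReal.ofReal (posterior mℋ P H Y ω y)
          * slog (posterior mℋ P H Y ω) y) ∂P
      = (∫⁻ ω, KLdiv (posterior mℋ P H Y ω) (posterior mℳ P M Y ω) ∂P)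
        + ∫⁻ ω, ∑ y, ENNReal.ofReal (posterior mℋ P H Y ω y)
          * slog (posterior mℋ P H Y ω) y ∂P :=
    lintegral_add_left hKLm _
  rw [reportRisk_eq P hY hMm, reportRisk_eq P hY hH, h1, h3, h4, ← h2]
  exact ENNReal.add_sub_cancel_right hHfin
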